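/- If R_n → 0⁺ and t_n are real numbers with R_n t_n → c for some c ∈ (0,∞), then h_{R_n}(t_n) → 2 J₁(c)/c, where h_R(t) = (R/(π sinh(R/2))) ∫_{−1}^{1} √(1 − (sinh(Rr/2)/sinh(R/2))²) e^{iRrt} dr and J₁ is the Bessel function of the first kind of order 1. -/

import Mathlib

open Complex Real Filter
open MeasureTheory intervalIntegral

/-- The Selberg--Harish-Chandra transform of the normalised indicator of a hyperbolic ball. -/
noncomputable def hR (R t : ℝ) : ℂ :=
  ((R / (Real.pi * Real.sinh (R / 2)) : ℝ) : ℂ) *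
    ∫ r in (-1 : ℝ)..1,
      (Real.sqrt (1 - (Real.sinh (R * r / 2) / Real.sinh (R / 2)) ^ 2) : ℂ) *
        Complex.exp (Complex.I * (R * r * t))

/-- The Bessel function of the first kind of order 1, via its power series. -/
noncomputable def besselJ1 (x : ℝ) : ℝ :=
  ∑' m : ℕ, ((-1 : ℝ) ^ m / (Nat.factorial m * Nat.factorial (m + 1))) * (x / 2) ^ (2 * m + 1)

lemma sinh_div_tendsto : Tendsto (fun x : ℝ => Real.sinh x / x) (nhdsWithin 0 {0}ᶜ) (nhds 1) := by
  have h := Real.hasDerivAt_sinh 0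
  rw [hasDerivAt_iff_tendsto_slope] at h
  rw [Real.cosh_zero] at h
  refine h.congr' ?_
  filter_upwards [self_mem_nhdsWithin] with x hx
  simp [slope_def_field, Real.sinh_zero]

noncomputable def wallisI (m : ℕ) : ℝ := ∫ r in (-1:ℝ)..1, Real.sqrt (1 - r^2) * r^(2*m)

lemma contI (m : ℕ) : Continuous (fun r : ℝ => Real.sqrt (1 - r^2) * r^(2*m)) := by
  fun_prop

lemma wallisI_succ (m : ℕ) : wallisI (m+1) = (2*m+1)/(2*m+4) * wallisI m := by
  have hder : ∀ x : ℝ, HasDerivAt (fun y : ℝ => -(1 - y^2) ^ ((3:ℝ)/2) / 3)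
      (x * (1 - x^2) ^ ((1:ℝ)/2)) x := by
    intro x
    have inner : HasDerivAt (fun y : ℝ => 1 - y^2) (-(2*x)) x := by
      simpa using ((hasDerivAt_pow 2 x).const_sub 1)
    have outer := Real.hasDerivAt_rpow_const (x := 1 - x^2) (p := (3:ℝ)/2)
      (Or.inr (by norm_num))
    have h := (outer.comp x inner).neg.div_const 3
    refine h.congr_deriv ?_
    norm_num
    ring
  have hu : ∀ x ∈ Set.uIcc (-1:ℝ) 1, HasDerivAt (fun y : ℝ => y^(2*m+1))
      (((2*m+1 : ℕ) : ℝ) * x^(2*m)) x := by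
    intro x _
    simpa using hasDerivAt_pow (2*m+1) x
  have hv : ∀ x ∈ Set.uIcc (-1:ℝ) 1, HasDerivAt (fun y : ℝ => -(1 - y^2) ^ ((3:ℝ)/2) / 3)
      (x * (1 - x^2) ^ ((1:ℝ)/2)) x := fun x _ => hder x
  have hcont32 : Continuous (fun y : ℝ => (1 - y^2) ^ ((3:ℝ)/2)) := by
    apply Continuous.rpow_const (by fun_prop)
    intro x; right; norm_num
  have hu' : IntervalIntegrable (fun x : ℝ => ((2*m+1 : ℕ) : ℝ) * x^(2*m)) MeasureTheory.volume (-1) 1 := by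
    apply Continuous.intervalIntegrable; fun_prop
  have hv' : IntervalIntegrable (fun x : ℝ => x * (1 - x^2) ^ ((1:ℝ)/2)) MeasureTheory.volume (-1) 1 := by
    apply Continuous.intervalIntegrable
    apply Continuous.mul continuous_id
    apply Continuous.rpow_const (by fun_prop)
    intro x; right; norm_num
  have H := integral_mul_deriv_eq_deriv_mul hu hv hu' hv'
  -- LHS : ∫ x in -1..1, x^(2m+1) * (x * (1-x^2)^(1/2)) = wallisI (m+1)
  have hL : (∫ x in (-1:ℝ)..1, x^(2*m+1) * (x * (1 - x^2) ^ ((1:ℝ)/2)))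
      = wallisI (m+1) := by
    unfold wallisI
    congr 1
    funext x
    rw [Real.sqrt_eq_rpow]
    ring
  -- boundary terms vanish
  have hb1 : -(1 - (1:ℝ)^2) ^ ((3:ℝ)/2) / 3 = 0 := by
    norm_num
  have hb2 : -(1 - (-1:ℝ)^2) ^ ((3:ℝ)/2) / 3 = 0 := by
    norm_num
  -- the RHS integral
  have hR2 : (∫ x in (-1:ℝ)..1, ((2*m+1 : ℕ) : ℝ) * x^(2*m) * (-(1 - x^2) ^ ((3:ℝ)/2) / 3))
      = -(((2*m+1 : ℕ) : ℝ)/3) * (wallisI m - wallisI (m+1)) := by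
    have congr1 : ∀ x ∈ Set.uIcc (-1:ℝ) 1,
        ((2*m+1 : ℕ) : ℝ) * x^(2*m) * (-(1 - x^2) ^ ((3:ℝ)/2) / 3)
        = -(((2*m+1 : ℕ) : ℝ)/3) * (Real.sqrt (1 - x^2) * x^(2*m) - Real.sqrt (1 - x^2) * x^(2*(m+1))) := by
      intro x hx
      rw [Set.uIcc_of_le (by norm_num)] at hx
      have h1 : (0:ℝ) ≤ 1 - x^2 := by
        nlinarith [hx.1, hx.2]
      have h32 : (1 - x^2) ^ ((3:ℝ)/2) = (1 - x^2) * (1 - x^2) ^ ((1:ℝ)/2) := by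
        rw [show ((3:ℝ)/2) = 1 + 1/2 by norm_num, Real.rpow_add' h1 (by norm_num), Real.rpow_one]
      rw [h32, ← Real.sqrt_eq_rpow]
      ring
    rw [integral_congr congr1, intervalIntegral.integral_const_mul,
      intervalIntegral.integral_sub ((contI m).intervalIntegrable _ _) ((contI (m+1)).intervalIntegrable _ _)]
    rfl
  rw [hL, hb1, hb2, hR2] at H
  have key : wallisI (m+1) * (2*(m:ℝ)+4) = (2*(m:ℝ)+1) * wallisI m := by
    push_cast at H
    linear_combination 3 * H
  have h24 : (2*(m:ℝ)+4) ≠ 0 := by positivity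
  push_cast
  rw [div_mul_eq_mul_div, eq_div_iff h24]
  linear_combination key

lemma wallisI_eq (m : ℕ) : wallisI m
    = π * (Nat.factorial (2*m)) / (2 * 4^m * Nat.factorial m * Nat.factorial (m+1)) := by
  induction m with
  | zero =>
      unfold wallisI
      simp only [Nat.mul_zero, pow_zero, mul_one]
      rw [integral_sqrt_one_sub_sq]
      norm_num [Nat.factorial]
  | succ k ih =>
      rw [wallisI_succ, ih]
      have h1 : (Nat.factorial (2*(k+1)) : ℝ) = (2*k+2) * (2*k+1) * Nat.factorial (2*k) := by
        have : 2*(k+1) = (2*k+1) + 1 := by ring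
        rw [this, Nat.factorial_succ, Nat.factorial_succ]
        push_cast; ring
      have h2 : (Nat.factorial (k+2) : ℝ) = (k+2) * Nat.factorial (k+1) := by
        rw [Nat.factorial_succ]; push_cast; ring
      have hf1 : (Nat.factorial k : ℝ) ≠ 0 := by positivity
      have hf2 : (Nat.factorial (k+1) : ℝ) ≠ 0 := by positivity
      have h4 : (4:ℝ)^k ≠ 0 := by positivity
      have h24 : (2*(k:ℝ)+4) ≠ 0 := by positivity
      rw [show k+1+1 = k+2 from rfl, h1, h2, Nat.factorial_succ (k)]
      field_simp
      push_cast; ring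

lemma summable_even_pow_fact (c : ℝ) : Summable (fun m : ℕ => c^(2*m) / Nat.factorial (2*m)) :=
  (Real.summable_pow_div_factorial c).comp_injective (fun a b h => by omega)

lemma cos_integral (c : ℝ) :
    (∫ r in (-1:ℝ)..1, Real.sqrt (1 - r^2) * Real.cos (c * r))
      = π/2 * ∑' m : ℕ, ((-1:ℝ) ^ m / (Nat.factorial m * Nat.factorial (m + 1))) * (c/2) ^ (2*m) := by
  set F : ℕ → ℝ → ℝ := fun m r => Real.sqrt (1 - r^2) * ((-1:ℝ)^m * (c*r)^(2*m) / Nat.factorial (2*m)) with hF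
  have hFcont : ∀ m, Continuous (F m) := by intro m; fun_prop
  have hsum : ∀ r : ℝ, ∑' m, F m r = Real.sqrt (1 - r^2) * Real.cos (c * r) := by
    intro r
    rw [Real.cos_eq_tsum, ← tsum_mul_left]
  have hle : (-1:ℝ) ≤ 1 := by norm_num
  rw [integral_of_le hle]
  have step1 : (∫ r in Set.Ioc (-1:ℝ) 1, Real.sqrt (1 - r^2) * Real.cos (c * r))
      = ∑' m, ∫ r in Set.Ioc (-1:ℝ) 1, F m r := by
    have e1 : (∫ r in Set.Ioc (-1:ℝ) 1, Real.sqrt (1 - r^2) * Real.cos (c * r))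
        = ∫ r in Set.Ioc (-1:ℝ) 1, ∑' m, F m r :=
      setIntegral_congr_fun measurableSet_Ioc (fun r _ => (hsum r).symm)
    rw [e1]
    refine (MeasureTheory.integral_tsum_of_summable_integral_norm ?_ ?_).symm
    · intro m
      exact (hFcont m).integrableOn_Ioc
    · apply Summable.of_nonneg_of_le (fun m => integral_nonneg (fun r => norm_nonneg _))
        (fun m => ?_) ((summable_even_pow_fact c).mul_left 2)
      have hb : ∀ r ∈ Set.Ioc (-1:ℝ) 1, ‖F m r‖ ≤ c^(2*m) / Nat.factorial (2*m) := by
        intro r hr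
        have h1 : |r| ≤ 1 := abs_le.2 ⟨le_of_lt hr.1, hr.2⟩
        have hs : Real.sqrt (1 - r^2) ≤ 1 := Real.sqrt_le_one.2 (by nlinarith [abs_le.1 h1])
        have habs : |(c*r)^(2*m)| ≤ c^(2*m) := by
          rw [_root_.abs_pow, _root_.abs_mul]
          calc (|c| * |r|)^(2*m) ≤ |c|^(2*m) :=
                pow_le_pow_left₀ (by positivity) (mul_le_of_le_one_right (abs_nonneg c) h1) _
            _ = c^(2*m) := by
                rw [pow_abs, _root_.abs_of_nonneg ((even_two_mul m).pow_nonneg c)]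
        have h2 : |(-1:ℝ)^m * (c*r)^(2*m) / Nat.factorial (2*m)|
            ≤ c^(2*m) / Nat.factorial (2*m) := by
          rw [_root_.abs_div, _root_.abs_mul, _root_.abs_pow, _root_.abs_neg, _root_.abs_one, one_pow, one_mul, Nat.abs_cast]
          gcongr
        calc ‖F m r‖ = Real.sqrt (1 - r^2) * |(-1:ℝ)^m * (c*r)^(2*m) / Nat.factorial (2*m)| := by
              rw [Real.norm_eq_abs, hF, _root_.abs_mul, _root_.abs_of_nonneg (Real.sqrt_nonneg _)]
          _ ≤ 1 * (c^(2*m) / Nat.factorial (2*m)) :=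
              mul_le_mul hs h2 (abs_nonneg _) one_pos.le
          _ = c^(2*m) / Nat.factorial (2*m) := one_mul _
      calc (∫ r in Set.Ioc (-1:ℝ) 1, ‖F m r‖)
          ≤ ∫ _r in Set.Ioc (-1:ℝ) 1, c^(2*m) / Nat.factorial (2*m) := by
            apply setIntegral_mono_on ((hFcont m).norm.integrableOn_Ioc)
              (integrableOn_const measure_Ioc_lt_top.ne) measurableSet_Ioc hb
        _ = 2 * (c^(2*m) / Nat.factorial (2*m)) := by
            rw [setIntegral_const, Real.volume_real_Ioc]
            norm_num
  rw [step1, ← tsum_mul_left]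
  apply tsum_congr
  intro m
  have hterm : (∫ r in Set.Ioc (-1:ℝ) 1, F m r)
      = ((-1:ℝ)^m * c^(2*m) / Nat.factorial (2*m)) * wallisI m := by
    have : ∀ r : ℝ, F m r = ((-1:ℝ)^m * c^(2*m) / Nat.factorial (2*m)) * (Real.sqrt (1 - r^2) * r^(2*m)) := by
      intro r; rw [hF]; simp only [mul_pow]; ring
    simp_rw [this]
    rw [MeasureTheory.integral_const_mul]
    congr 1
    unfold wallisI
    rw [integral_of_le hle]
  rw [hterm, wallisI_eq]
  have hpow : (c/2)^(2*m) = c^(2*m)/4^m := by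
    rw [div_pow]
    congr 1
    rw [pow_mul]; norm_num
  have hf0 : (Nat.factorial (2*m) : ℝ) ≠ 0 := by positivity
  have hf1 : (Nat.factorial m : ℝ) ≠ 0 := by positivity
  have hf2 : (Nat.factorial (m+1) : ℝ) ≠ 0 := by positivity
  have h4 : (4:ℝ)^m ≠ 0 := by positivity
  rw [hpow]
  field_simp

lemma sin_integral_zero (c : ℝ) :
    (∫ r in (-1:ℝ)..1, Real.sqrt (1 - r^2) * Real.sin (c * r)) = 0 := by
  set f : ℝ → ℝ := fun r => Real.sqrt (1 - r^2) * Real.sin (c * r) with hf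
  have hcont : Continuous f := by fun_prop
  have hsplit : (∫ r in (-1:ℝ)..1, f r)
      = (∫ r in (-1:ℝ)..0, f r) + ∫ r in (0:ℝ)..1, f r :=
    (integral_add_adjacent_intervals (hcont.intervalIntegrable _ _)
      (hcont.intervalIntegrable _ _)).symm
  have hneg : (∫ r in (-1:ℝ)..0, f r) = ∫ r in (0:ℝ)..1, f (-r) := by
    rw [integral_comp_neg f]
    norm_num
  have hodd : ∀ r : ℝ, f (-r) = - f r := by
    intro r
    simp only [hf]
    rw [neg_pow, mul_neg, Real.sin_neg]
    ring_nf
  rw [hsplit, hneg]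
  rw [integral_congr (g := fun r => - f r) (fun r _ => hodd r), intervalIntegral.integral_neg]
  ring

lemma complex_integral_eq (c : ℝ) :
    (∫ r in (-1:ℝ)..1, ((Real.sqrt (1 - r^2) : ℝ) : ℂ) * Complex.exp (Complex.I * (c * r)))
      = (((∫ r in (-1:ℝ)..1, Real.sqrt (1 - r^2) * Real.cos (c * r) : ℝ)) : ℂ) := by
  have h1 : ∀ r : ℝ, ((Real.sqrt (1 - r^2) : ℝ) : ℂ) * Complex.exp (Complex.I * (c * r))
      = (((Real.sqrt (1 - r^2) * Real.cos (c * r) : ℝ)) : ℂ)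
        + (((Real.sqrt (1 - r^2) * Real.sin (c * r) : ℝ)) : ℂ) * Complex.I := by
    intro r
    have : Complex.I * ((c : ℂ) * (r : ℝ)) = ((c * r : ℝ) : ℂ) * Complex.I := by
      push_cast; ring
    rw [this, Complex.exp_mul_I]
    rw [← Complex.ofReal_cos, ← Complex.ofReal_sin]
    push_cast
    ring
  rw [intervalIntegral.integral_congr (fun r _ => h1 r)]
  rw [intervalIntegral.integral_add]
  · rw [intervalIntegral.integral_mul_const]
    have e1 : (∫ r in (-1:ℝ)..1, (((Real.sqrt (1 - r^2) * Real.cos (c * r) : ℝ)) : ℂ))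
        = (((∫ r in (-1:ℝ)..1, Real.sqrt (1 - r^2) * Real.cos (c * r) : ℝ)) : ℂ) := by
      rw [← intervalIntegral.integral_ofReal]
    have e2 : (∫ r in (-1:ℝ)..1, (((Real.sqrt (1 - r^2) * Real.sin (c * r) : ℝ)) : ℂ))
        = (((∫ r in (-1:ℝ)..1, Real.sqrt (1 - r^2) * Real.sin (c * r) : ℝ)) : ℂ) := by
      rw [← intervalIntegral.integral_ofReal]
    rw [e1, e2, sin_integral_zero]
    simp
  · apply Continuous.intervalIntegrable
    fun_prop
  · apply Continuous.intervalIntegrable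
    fun_prop

section limits
variable (Rs ts : ℕ → ℝ) (c : ℝ) (hc : 0 < c)
  (hRpos : ∀ n, 0 < Rs n) (hR0 : Tendsto Rs atTop (nhds 0))
  (hRt : Tendsto (fun n => Rs n * ts n) atTop (nhds c))

include hRpos hR0 in
lemma sinh_ratio_tendsto :
    Tendsto (fun n => Rs n / 2 / Real.sinh (Rs n / 2)) atTop (nhds 1) := by
  have hhalf : Tendsto (fun n => Rs n / 2) atTop (nhdsWithin 0 {0}ᶜ) := by
    rw [tendsto_nhdsWithin_iff]
    constructor
    · simpa using hR0.div_const 2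
    · filter_upwards with n
      simp only [Set.mem_compl_iff, Set.mem_singleton_iff]
      have := hRpos n; positivity
  have h1 : Tendsto (fun n => Real.sinh (Rs n / 2) / (Rs n / 2)) atTop (nhds 1) :=
    sinh_div_tendsto.comp hhalf
  have h2 := (h1.inv₀ one_ne_zero)
  rw [inv_one] at h2
  apply h2.congr
  intro n
  rw [inv_div]

include hRpos hR0 in
lemma factor_tendsto :
    Tendsto (fun n => Rs n / (Real.pi * Real.sinh (Rs n / 2))) atTop (nhds (2 / Real.pi)) := by
  have h := ((sinh_ratio_tendsto Rs hRpos hR0).const_mul (2 / Real.pi))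
  have : (2 / Real.pi) * 1 = 2 / Real.pi := by ring
  rw [this] at h
  apply h.congr
  intro n
  have hπ : Real.pi ≠ 0 := Real.pi_ne_zero
  field_simp

include hRpos hR0 in
lemma ratio_tendsto (r : ℝ) (hr : r ≠ 0) :
    Tendsto (fun n => Real.sinh (Rs n * r / 2) / Real.sinh (Rs n / 2)) atTop (nhds r) := by
  have hhalf : Tendsto (fun n => Rs n * r / 2) atTop (nhdsWithin 0 {0}ᶜ) := by
    rw [tendsto_nhdsWithin_iff]
    constructor
    · simpa using (hR0.mul_const r).div_const 2
    · filter_upwards with n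
      simp only [Set.mem_compl_iff, Set.mem_singleton_iff]
      have h0 := (hRpos n).ne'
      intro h
      have h2 : Rs n * r = 0 := by linarith
      rcases mul_eq_zero.1 h2 with h3 | h3
      · exact absurd h3 h0
      · exact hr h3
  have h1 : Tendsto (fun n => Real.sinh (Rs n * r / 2) / (Rs n * r / 2)) atTop (nhds 1) :=
    sinh_div_tendsto.comp hhalf
  have h2 := (h1.mul_const r).mul (sinh_ratio_tendsto Rs hRpos hR0)
  rw [one_mul, mul_one] at h2
  apply h2.congr
  intro n
  have hsinh : Real.sinh (Rs n / 2) ≠ 0 := by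
    rw [Real.sinh_ne_zero]
    have := hRpos n; positivity
  have hRn : Rs n ≠ 0 := (hRpos n).ne'
  field_simp
end limits

section limits2
variable (Rs ts : ℕ → ℝ) (c : ℝ)

lemma integral_tendsto (hRpos : ∀ n, 0 < Rs n) (hR0 : Tendsto Rs atTop (nhds 0))
    (hRt : Tendsto (fun n => Rs n * ts n) atTop (nhds c)) :
    Tendsto (fun n => ∫ r in (-1:ℝ)..1,
        ((Real.sqrt (1 - (Real.sinh (Rs n * r / 2) / Real.sinh (Rs n / 2)) ^ 2) : ℝ) : ℂ)
          * Complex.exp (Complex.I * (Rs n * r * ts n)))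
      atTop
      (nhds (∫ r in (-1:ℝ)..1, ((Real.sqrt (1 - r^2) : ℝ) : ℂ) * Complex.exp (Complex.I * (c * r)))) := by
  have hle : (-1:ℝ) ≤ 1 := by norm_num
  simp only [intervalIntegral.integral_of_le hle]
  apply MeasureTheory.tendsto_integral_of_dominated_convergence (fun _ => (1:ℝ))
  · intro n
    apply Continuous.aestronglyMeasurable
    fun_prop
  · exact MeasureTheory.integrableOn_const measure_Ioc_lt_top.ne
  · intro n
    filter_upwards with r
    rw [norm_mul]
    have h1 : ‖((Real.sqrt (1 - (Real.sinh (Rs n * r / 2) / Real.sinh (Rs n / 2)) ^ 2) : ℝ) : ℂ)‖ ≤ 1 := by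
      rw [Complex.norm_real, Real.norm_eq_abs, _root_.abs_of_nonneg (Real.sqrt_nonneg _)]
      exact Real.sqrt_le_one.2 (by nlinarith [sq_nonneg (Real.sinh (Rs n * r / 2) / Real.sinh (Rs n / 2))])
    have h2 : ‖Complex.exp (Complex.I * (Rs n * r * ts n))‖ = 1 := by
      rw [Complex.norm_exp]
      simp [Complex.mul_re]
    rw [h2, mul_one]
    exact h1
  · have h0 : ∀ᵐ (r : ℝ), r ≠ (0:ℝ) := by
      have hs : {a : ℝ | ¬ a ≠ 0} = {0} := by ext; simp
      rw [MeasureTheory.ae_iff, hs]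
      exact measure_singleton 0
    filter_upwards [MeasureTheory.ae_restrict_of_ae h0] with r hr
    have t1 := ratio_tendsto Rs hRpos hR0 r hr
    have csq : Continuous (fun y : ℝ => Real.sqrt (1 - y^2)) := by fun_prop
    have t2 : Tendsto (fun n => ((Real.sqrt (1 - (Real.sinh (Rs n * r / 2) / Real.sinh (Rs n / 2)) ^ 2) : ℝ) : ℂ))
        atTop (nhds ((Real.sqrt (1 - r^2) : ℝ) : ℂ)) :=
      (Complex.continuous_ofReal.tendsto _).comp ((csq.tendsto r).comp t1)
    have targ : Tendsto (fun n => Rs n * r * ts n) atTop (nhds (c * r)) :=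
      (hRt.mul_const r).congr (fun n => by ring)
    have hcexp : Continuous (fun y : ℝ => Complex.exp (Complex.I * (y : ℂ))) :=
      Complex.continuous_exp.comp (continuous_const.mul Complex.continuous_ofReal)
    have t3 : Tendsto (fun n => Complex.exp (Complex.I * ((Rs n * r * ts n : ℝ) : ℂ)))
        atTop (nhds (Complex.exp (Complex.I * ((c * r : ℝ) : ℂ)))) :=
      (hcexp.tendsto _).comp targ
    have t4 := t2.mul t3
    have e1 : ∀ n, ((Real.sqrt (1 - (Real.sinh (Rs n * r / 2) / Real.sinh (Rs n / 2)) ^ 2) : ℝ) : ℂ)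
        * Complex.exp (Complex.I * ((Rs n * r * ts n : ℝ) : ℂ))
        = ((Real.sqrt (1 - (Real.sinh (Rs n * r / 2) / Real.sinh (Rs n / 2)) ^ 2) : ℝ) : ℂ)
        * Complex.exp (Complex.I * ((Rs n : ℝ) * (r:ℝ) * (ts n : ℝ) : ℂ)) := by
      intro n; push_cast; ring_nf
    have e2 : Complex.exp (Complex.I * ((c * r : ℝ) : ℂ)) = Complex.exp (Complex.I * ((c:ℂ) * (r:ℂ))) := by
      push_cast; ring_nf
    rw [← e2]
    exact t4.congr e1
end limits2

/-- If `Rₙ → 0⁺` and `Rₙ tₙ → c ∈ (0,∞)`, then `h_{Rₙ}(tₙ) → 2 J₁(c)/c`. -/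
theorem hR_tendsto_besselJ1 (Rs ts : ℕ → ℝ) (c : ℝ) (hc : 0 < c)
    (hRpos : ∀ n, 0 < Rs n) (hR0 : Tendsto Rs atTop (nhds 0))
    (hRt : Tendsto (fun n => Rs n * ts n) atTop (nhds c)) :
    Tendsto (fun n => hR (Rs n) (ts n)) atTop (nhds ((2 * besselJ1 c / c : ℝ) : ℂ)) := by
  have hfac := factor_tendsto Rs hRpos hR0
  have hint := integral_tendsto Rs ts c hRpos hR0 hRt
  have hmul := ((Complex.continuous_ofReal.tendsto _).comp hfac).mul hint
  have hval : ((2 / Real.pi : ℝ) : ℂ) *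
      (∫ r in (-1:ℝ)..1, ((Real.sqrt (1 - r^2) : ℝ) : ℂ) * Complex.exp (Complex.I * (c * r)))
      = ((2 * besselJ1 c / c : ℝ) : ℂ) := by
    rw [complex_integral_eq c, cos_integral c, ← Complex.ofReal_mul]
    congr 1
    have hS : besselJ1 c
        = (∑' m : ℕ, ((-1:ℝ)^m / (Nat.factorial m * Nat.factorial (m+1))) * (c/2)^(2*m)) * (c/2) := by
      unfold besselJ1
      rw [← tsum_mul_right]
      congr 1; funext m; rw [pow_succ]; ring
    rw [hS]
    have hπ : Real.pi ≠ 0 := Real.pi_ne_zero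
    have hc' : c ≠ 0 := hc.ne'
    field_simp
  rw [hval] at hmul
  exact hmul.congr (fun n => rfl)
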